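/- Let (R, m) be a Noetherian local ring, I an m-primary ideal, and M a finitely generated R-module. Then for all sufficiently large n, ℓ_R((I^{n+1}M :_M m)/I^{n+1}M) ≤ ℓ_R(I^n M/I^{n+1}M) + ℓ_R(0 :_M m). -/

import Mathlib

open IsLocalRing Submodule

/-- The colon submodule `(N :_M J) = {x ∈ M ∣ J x ⊆ N}`. -/
def Submodule.colonBy {R M : Type*} [CommRing R] [AddCommGroup M] [Module R M]
    (N : Submodule R M) (J : Ideal R) : Submodule R M where
  carrier := {x | ∀ r ∈ J, r • x ∈ N}
  add_mem' := fun {a b} ha hb r hr => by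
    rw [smul_add]; exact N.add_mem (ha r hr) (hb r hr)
  zero_mem' := fun r hr => by rw [smul_zero]; exact N.zero_mem
  smul_mem' := fun c {x} hx r hr => by
    rw [smul_comm]; exact N.smul_mem c (hx r hr)

/-- The length of a module: the height of `⊤` in its lattice of submodules. -/
noncomputable def moduleLength (R M : Type*) [Ring R] [AddCommGroup M] [Module R M] : ℕ∞ :=
  Order.height (⊤ : Submodule R M)

universe u v

section HeightLemmas
open Order

section OrderLemmas

lemma height_add_one_le {γ : Type*} [Preorder γ] {x y : γ} (h : x < y) :
    Order.height x + 1 ≤ Order.height y := by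
  by_cases htop : Order.height y = ⊤
  · simp [htop]
  · have hfin : Order.height x < ⊤ :=
      lt_of_le_of_lt (Order.height_mono h.le) (lt_top_iff_ne_top.mpr htop)
    exact (ENat.add_one_le_iff hfin.ne).mpr (Order.height_strictMono h hfin)

lemma height_pair_le {α : Type*} {β : Type*} [PartialOrder α] [PartialOrder β]
    (a : α) (b : β) :
    Order.height ((a, b) : α × β) ≤ Order.height a + Order.height b := by
  have H : ∀ (n : ℕ) (p : LTSeries (α × β)), p.length = n →
      (p.length : ℕ∞) ≤ Order.height p.last.1 + Order.height p.last.2 := by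
    intro n
    induction n with
    | zero => intro p hp; simp [hp]
    | succ n ih =>
      intro p hp
      have hlen : p.length ≠ 0 := by omega
      have hq : p.eraseLast.length = n := by simp [RelSeries.eraseLast]; omega
      have hlt : p.eraseLast.last < p.last := p.eraseLast_last_rel_last hlen
      have h1 := ih p.eraseLast hq
      rw [hp]
      rcases Prod.lt_iff.mp hlt with ⟨h₁, h₂⟩ | ⟨h₁, h₂⟩
      · calc ((n + 1 : ℕ) : ℕ∞) = n + 1 := by push_cast; rfl
          _ ≤ (Order.height p.eraseLast.last.1 + Order.height p.eraseLast.last.2) + 1 := by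
              rw [hq] at h1; exact add_le_add_left h1 1
          _ = (Order.height p.eraseLast.last.1 + 1) + Order.height p.eraseLast.last.2 := by
              ring
          _ ≤ Order.height p.last.1 + Order.height p.last.2 :=
              add_le_add (_root_.height_add_one_le h₁) (Order.height_mono h₂)
      · calc ((n + 1 : ℕ) : ℕ∞) = n + 1 := by push_cast; rfl
          _ ≤ (Order.height p.eraseLast.last.1 + Order.height p.eraseLast.last.2) + 1 := by
              rw [hq] at h1; exact add_le_add_left h1 1
          _ = Order.height p.eraseLast.last.1 + (Order.height p.eraseLast.last.2 + 1) := by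
              ring
          _ ≤ Order.height p.last.1 + Order.height p.last.2 :=
              add_le_add (Order.height_mono h₁) (_root_.height_add_one_le h₂)
  apply Order.height_le
  intro p hp
  simpa [hp] using H p.length p rfl

lemma modular_eq_of_inf_sup {α : Type*} [Lattice α] [IsModularLattice α] {x y A : α}
    (hxy : x ≤ y) (hinf : x ⊓ A = y ⊓ A) (hsup : x ⊔ A = y ⊔ A) : x = y := by
  refine le_antisymm hxy (le_of_eq ?_)
  calc y = (y ⊔ A) ⊓ y := inf_eq_right.mpr le_sup_left |>.symm
    _ = (x ⊔ A) ⊓ y := by rw [hsup]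
    _ = x ⊔ A ⊓ y := sup_inf_assoc_of_le A hxy
    _ = x ⊔ x ⊓ A := by rw [inf_comm, hinf, inf_comm]
    _ = x := sup_inf_self

end OrderLemmas


section LengthLemmas

variable {R : Type u} [Ring R] {M : Type v} [AddCommGroup M] [Module R M]

lemma mlen_eq (N : Submodule R M) : moduleLength R ↥N = Order.height N := by
  unfold moduleLength
  rw [← Order.height_orderIso (Submodule.MapSubtype.orderIso N) ⊤]
  have h1 : (Submodule.MapSubtype.orderIso N) ⊤ = ⟨N, le_rfl⟩ := by
    apply Subtype.ext
    simp [Submodule.MapSubtype.orderIso]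
  rw [h1]
  apply le_antisymm
  · have := Order.height_le_height_apply_of_strictMono
      (fun (p : {p' : Submodule R M // p' ≤ N}) => (p : Submodule R M))
      (fun a b hab => hab) ⟨N, le_rfl⟩
    simpa using this
  · apply Order.height_le
    intro p hp
    have hle : ∀ i, p.toFun i ≤ N := by
      intro i
      have : p.toFun i ≤ p.last := p.monotone (Fin.le_last i)
      rwa [hp] at this
    let q : LTSeries {p' : Submodule R M // p' ≤ N} :=
      ⟨p.length, fun i => ⟨p.toFun i, hle i⟩, fun i => p.step i⟩
    have hlast : q.last = ⟨N, le_rfl⟩ := Subtype.ext hp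
    have := Order.length_le_height_last (p := q)
    rw [hlast] at this
    exact this

lemma mlen_mono {A B : Submodule R M} (h : A ≤ B) :
    moduleLength R ↥A ≤ moduleLength R ↥B := by
  rw [mlen_eq, mlen_eq]; exact Order.height_mono h

lemma mlen_map_le {M₂ : Type*} [AddCommGroup M₂] [Module R M₂] (f : M →ₗ[R] M₂)
    (N : Submodule R M) :
    moduleLength R ↥(Submodule.map f N) ≤ moduleLength R ↥N := by
  let g : ↥N →ₗ[R] ↥(Submodule.map f N) := f.restrict (fun x hx => Submodule.mem_map_of_mem hx)
  have hg : Function.Surjective g := by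
    rintro ⟨y, hy⟩
    obtain ⟨x, hx, rfl⟩ := hy
    exact ⟨⟨x, hx⟩, rfl⟩
  have hmono : Monotone (Submodule.comap g) := fun a b h => Submodule.comap_mono h
  have hsm : StrictMono (Submodule.comap g) :=
    hmono.strictMono_of_injective (Submodule.comap_injective_of_surjective hg)
  calc moduleLength R ↥(Submodule.map f N) = Order.height (⊤ : Submodule R ↥(Submodule.map f N)) := rfl
    _ ≤ Order.height (Submodule.comap g ⊤) := Order.height_le_height_apply_of_strictMono _ hsm ⊤
    _ ≤ Order.height (⊤ : Submodule R ↥N) := Order.height_mono le_top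
    _ = moduleLength R ↥N := rfl

end LengthLemmas

section SupLemma

variable {R : Type u} [Ring R] {M : Type v} [AddCommGroup M] [Module R M]

lemma mlen_sup_le (A B : Submodule R M) :
    moduleLength R ↥(A ⊔ B) ≤ moduleLength R ↥A + moduleLength R ↥B := by
  have key : Order.height (A ⊔ B) ≤
      Order.height A + Order.height (Submodule.map A.mkQ B) := by
    apply Order.height_le
    intro p hp
    let q : LTSeries (Submodule R M × Submodule R (M ⧸ A)) :=
      ⟨p.length, fun i => (p.toFun i ⊓ A, Submodule.map A.mkQ (p.toFun i)), by
        intro i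
        have hlt : p.toFun i.castSucc < p.toFun i.succ := p.step i
        refine lt_of_le_of_ne (show (p.toFun i.castSucc ⊓ A, Submodule.map A.mkQ (p.toFun i.castSucc)) ≤ (p.toFun i.succ ⊓ A, Submodule.map A.mkQ (p.toFun i.succ)) from Prod.mk_le_mk.mpr ⟨inf_le_inf_right A hlt.le, Submodule.map_mono hlt.le⟩) ?_
        intro hEq
        have h1 : p.toFun i.castSucc ⊓ A = p.toFun i.succ ⊓ A := congrArg Prod.fst hEq
        have h2 : Submodule.map A.mkQ (p.toFun i.castSucc) = Submodule.map A.mkQ (p.toFun i.succ) :=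
          congrArg Prod.snd hEq
        have h3 : p.toFun i.castSucc ⊔ A = p.toFun i.succ ⊔ A := by
          have e1 := Submodule.comap_map_eq A.mkQ (p.toFun i.castSucc)
          have e2 := Submodule.comap_map_eq A.mkQ (p.toFun i.succ)
          rw [Submodule.ker_mkQ] at e1 e2
          rw [← e1, ← e2, h2]
        exact absurd (modular_eq_of_inf_sup hlt.le h1 h3) hlt.ne⟩
    have hlast : q.last = (A, Submodule.map A.mkQ B) := by
      have h1 : p.last ⊓ A = A := by rw [hp]; exact inf_eq_right.mpr le_sup_left
      have h2 : Submodule.map A.mkQ p.last = Submodule.map A.mkQ B := by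
        rw [hp, Submodule.map_sup, Submodule.mkQ_map_self, bot_sup_eq]
      show (p.last ⊓ A, Submodule.map A.mkQ p.last) = _
      rw [h1, h2]
    have hq := Order.length_le_height_last (p := q)
    rw [hlast] at hq
    calc (p.length : ℕ∞) = (q.length : ℕ∞) := rfl
      _ ≤ Order.height ((A, Submodule.map A.mkQ B) : Submodule R M × Submodule R (M ⧸ A)) := hq
      _ ≤ Order.height A + Order.height (Submodule.map A.mkQ B) := height_pair_le _ _
  calc moduleLength R ↥(A ⊔ B) = Order.height (A ⊔ B) := mlen_eq _
    _ ≤ Order.height A + Order.height (Submodule.map A.mkQ B) := key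
    _ = moduleLength R ↥A + moduleLength R ↥(Submodule.map A.mkQ B) := by
        rw [mlen_eq, mlen_eq]
    _ ≤ moduleLength R ↥A + moduleLength R ↥B :=
        add_le_add_right (mlen_map_le A.mkQ B) _

end SupLemma

end HeightLemmas

section VendoredFiltration

variable {R : Type u} {M : Type v} [CommRing R] [AddCommGroup M] [Module R M] (I : Ideal R)

open Polynomial

open scoped Polynomial

/-- An `I`-filtration on the module `M` is a sequence of decreasing submodules `N i` such that
`I • (N i) ≤ N (i + 1)`. Note that we do not require the filtration to start from `⊤`. -/
@[ext]
structure Ideal.UFiltration (M : Type v) [AddCommGroup M] [Module R M] where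
  N : ℕ → Submodule R M
  mono : ∀ i, N (i + 1) ≤ N i
  smul_le : ∀ i, I • N i ≤ N (i + 1)

variable (F F' : I.UFiltration M) {I}

namespace Ideal.UFiltration

theorem pow_smul_le (i j : ℕ) : I ^ i • F.N j ≤ F.N (i + j) := by
  induction' i with _ ih
  · simp
  · rw [pow_succ', mul_smul, add_assoc, add_comm 1, ← add_assoc]
    exact (smul_mono_right _ ih).trans (F.smul_le _)

theorem pow_smul_le_pow_smul (i j k : ℕ) : I ^ (i + k) • F.N j ≤ I ^ k • F.N (i + j) := by
  rw [add_comm, pow_add, mul_smul]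
  exact smul_mono_right _ (F.pow_smul_le i j)

protected theorem antitone : Antitone F.N :=
  antitone_nat_of_succ_le F.mono

/-- The trivial `I`-filtration of `N`. -/
@[simps]
def _root_.Ideal.trivialUFiltration (I : Ideal R) (N : Submodule R M) : I.UFiltration M where
  N _ := N
  mono _ := le_rfl
  smul_le _ := Submodule.smul_le_right

/-- The `sup` of two `I.UFiltration`s is an `I.UFiltration`. -/
instance : Max (I.UFiltration M) :=
  ⟨fun F F' =>
    ⟨F.N ⊔ F'.N, fun i => sup_le_sup (F.mono i) (F'.mono i), fun i =>
      (Submodule.smul_sup _ _ _).trans_le <| sup_le_sup (F.smul_le i) (F'.smul_le i)⟩⟩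

/-- The `sSup` of a family of `I.UFiltration`s is an `I.UFiltration`. -/
instance : SupSet (I.UFiltration M) :=
  ⟨fun S =>
    { N := sSup (Ideal.UFiltration.N '' S)
      mono := fun i => by
        apply sSup_le_sSup_of_isCofinalFor _
        rintro _ ⟨⟨_, F, hF, rfl⟩, rfl⟩
        exact ⟨_, ⟨⟨_, F, hF, rfl⟩, rfl⟩, F.mono i⟩
      smul_le := fun i => by
        rw [sSup_eq_iSup', iSup_apply, Submodule.smul_iSup, iSup_apply]
        apply iSup_mono _
        rintro ⟨_, F, hF, rfl⟩
        exact F.smul_le i }⟩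

/-- The `inf` of two `I.UFiltration`s is an `I.UFiltration`. -/
instance : Min (I.UFiltration M) :=
  ⟨fun F F' =>
    ⟨F.N ⊓ F'.N, fun i => inf_le_inf (F.mono i) (F'.mono i), fun i =>
      (smul_inf_le _ _ _).trans <| inf_le_inf (F.smul_le i) (F'.smul_le i)⟩⟩

/-- The `sInf` of a family of `I.UFiltration`s is an `I.UFiltration`. -/
instance : InfSet (I.UFiltration M) :=
  ⟨fun S =>
    { N := sInf (Ideal.UFiltration.N '' S)
      mono := fun i => by
        apply sInf_le_sInf_of_isCoinitialFor _
        rintro _ ⟨⟨_, F, hF, rfl⟩, rfl⟩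
        exact ⟨_, ⟨⟨_, F, hF, rfl⟩, rfl⟩, F.mono i⟩
      smul_le := fun i => by
        rw [sInf_eq_iInf', iInf_apply, iInf_apply]
        refine smul_iInf_le.trans ?_
        apply iInf_mono _
        rintro ⟨_, F, hF, rfl⟩
        exact F.smul_le i }⟩

instance : Top (I.UFiltration M) :=
  ⟨I.trivialUFiltration ⊤⟩

instance : Bot (I.UFiltration M) :=
  ⟨I.trivialUFiltration ⊥⟩

@[simp]
theorem sup_N : (F ⊔ F').N = F.N ⊔ F'.N :=
  rfl

@[simp]
theorem sSup_N (S : Set (I.UFiltration M)) : (sSup S).N = sSup (Ideal.UFiltration.N '' S) :=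
  rfl

@[simp]
theorem inf_N : (F ⊓ F').N = F.N ⊓ F'.N :=
  rfl

@[simp]
theorem sInf_N (S : Set (I.UFiltration M)) : (sInf S).N = sInf (Ideal.UFiltration.N '' S) :=
  rfl

@[simp]
theorem top_N : (⊤ : I.UFiltration M).N = ⊤ :=
  rfl

@[simp]
theorem bot_N : (⊥ : I.UFiltration M).N = ⊥ :=
  rfl

@[simp]
theorem iSup_N {ι : Sort*} (f : ι → I.UFiltration M) : (iSup f).N = ⨆ i, (f i).N :=
  congr_arg sSup (Set.range_comp _ _).symm

@[simp]
theorem iInf_N {ι : Sort*} (f : ι → I.UFiltration M) : (iInf f).N = ⨅ i, (f i).N :=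
  congr_arg sInf (Set.range_comp _ _).symm

instance : PartialOrder (I.UFiltration M) :=
  PartialOrder.lift _ fun _ _ ↦ Ideal.UFiltration.ext

instance : CompleteLattice (I.UFiltration M) :=
  Function.Injective.completeLattice Ideal.UFiltration.N
    (fun _ _ => Ideal.UFiltration.ext) .rfl .rfl sup_N inf_N
    (fun _ => sSup_image) (fun _ => sInf_image) top_N bot_N

instance : Inhabited (I.UFiltration M) :=
  ⟨⊥⟩

/-- An `I` filtration is stable if `I • F.N n = F.N (n+1)` for large enough `n`. -/
def Stable : Prop :=
  ∃ n₀, ∀ n ≥ n₀, I • F.N n = F.N (n + 1)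

/-- The trivial stable `I`-filtration of `N`. -/
@[simps]
def _root_.Ideal.stableUFiltration (I : Ideal R) (N : Submodule R M) : I.UFiltration M where
  N i := I ^ i • N
  mono i := by rw [add_comm, pow_add, mul_smul]; exact Submodule.smul_le_right
  smul_le i := by rw [add_comm, pow_add, mul_smul, pow_one]

theorem _root_.Ideal.stableUFiltration_stable (I : Ideal R) (N : Submodule R M) :
    (I.stableUFiltration N).Stable := by
  use 0
  intro n _
  show I • I ^ n • N = I ^ (n + 1) • N
  rw [add_comm, pow_add, mul_smul, pow_one]

variable {F F'}

theorem Stable.exists_pow_smul_eq (h : F.Stable) : ∃ n₀, ∀ k, F.N (n₀ + k) = I ^ k • F.N n₀ := by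
  obtain ⟨n₀, hn⟩ := h
  use n₀
  intro k
  induction' k with _ ih
  · simp
  · rw [← add_assoc, ← hn, ih, add_comm, pow_add, mul_smul, pow_one]
    omega

theorem Stable.exists_pow_smul_eq_of_ge (h : F.Stable) :
    ∃ n₀, ∀ n ≥ n₀, F.N n = I ^ (n - n₀) • F.N n₀ := by
  obtain ⟨n₀, hn₀⟩ := h.exists_pow_smul_eq
  use n₀
  intro n hn
  convert hn₀ (n - n₀)
  rw [add_comm, tsub_add_cancel_of_le hn]

theorem stable_iff_exists_pow_smul_eq_of_ge :
    F.Stable ↔ ∃ n₀, ∀ n ≥ n₀, F.N n = I ^ (n - n₀) • F.N n₀ := by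
  refine ⟨Stable.exists_pow_smul_eq_of_ge, fun h => ⟨h.choose, fun n hn => ?_⟩⟩
  rw [h.choose_spec n hn, h.choose_spec (n + 1) (by omega), smul_smul, ← pow_succ',
    tsub_add_eq_add_tsub hn]

theorem Stable.exists_forall_le (h : F.Stable) (e : F.N 0 ≤ F'.N 0) :
    ∃ n₀, ∀ n, F.N (n + n₀) ≤ F'.N n := by
  obtain ⟨n₀, hF⟩ := h
  use n₀
  intro n
  induction' n with n hn
  · refine (F.antitone ?_).trans e; simp
  · rw [add_right_comm, ← hF]
    · exact (smul_mono_right _ hn).trans (F'.smul_le _)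
    simp

theorem Stable.bounded_difference (h : F.Stable) (h' : F'.Stable) (e : F.N 0 = F'.N 0) :
    ∃ n₀, ∀ n, F.N (n + n₀) ≤ F'.N n ∧ F'.N (n + n₀) ≤ F.N n := by
  obtain ⟨n₁, h₁⟩ := h.exists_forall_le (le_of_eq e)
  obtain ⟨n₂, h₂⟩ := h'.exists_forall_le (le_of_eq e.symm)
  use max n₁ n₂
  intro n
  refine ⟨(F.antitone ?_).trans (h₁ n), (F'.antitone ?_).trans (h₂ n)⟩ <;> simp

open PolynomialModule

variable (F F')

/-- The `R[IX]`-submodule of `M[X]` associated with an `I`-filtration. -/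
protected noncomputable def submodule : Submodule (reesAlgebra I) (PolynomialModule R M) where
  carrier := { f | ∀ i, f.coeff i ∈ F.N i }
  add_mem' hf hg i := Submodule.add_mem _ (hf i) (hg i)
  zero_mem' _ := Submodule.zero_mem _
  smul_mem' r f hf i := by
    rw [Subalgebra.smul_def, PolynomialModule.smul_apply]
    apply Submodule.sum_mem
    rintro ⟨j, k⟩ e
    replace e : j + k = i := Finset.HasAntidiagonal.mem_antidiagonal.mp e
    subst e
    exact F.pow_smul_le j k (Submodule.smul_mem_smul (r.2 j) (hf k))

@[simp]
theorem mem_submodule (f : PolynomialModule R M) : f ∈ F.submodule ↔ ∀ i, f.coeff i ∈ F.N i :=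
  Iff.rfl

theorem inf_submodule : (F ⊓ F').submodule = F.submodule ⊓ F'.submodule := by
  ext
  exact forall_and

variable (I M)

/-- `Ideal.UFiltration.submodule` as an `InfHom`. -/
noncomputable def submoduleInfHom :
    InfHom (I.UFiltration M) (Submodule (reesAlgebra I) (PolynomialModule R M)) where
  toFun := Ideal.UFiltration.submodule
  map_inf' := inf_submodule

variable {I M}

theorem submodule_closure_single :
    AddSubmonoid.closure (⋃ i, single R i '' (F.N i : Set M)) = F.submodule.toAddSubmonoid := by
  apply le_antisymm
  · rw [AddSubmonoid.closure_le, Set.iUnion_subset_iff]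
    rintro i _ ⟨m, hm, rfl⟩ j
    rw [coeff_single, Finsupp.single_apply]
    split_ifs with h
    · rwa [← h]
    · exact (F.N j).zero_mem
  · intro f hf
    rw [← f.ofCoeff_coeff, ← f.coeff.sum_single, ofCoeff_finsuppSum]
    apply AddSubmonoid.sum_mem _ _
    rintro c -
    exact AddSubmonoid.subset_closure (Set.subset_iUnion _ c <| Set.mem_image_of_mem _ (hf c))

theorem submodule_span_single :
    Submodule.span (reesAlgebra I) (⋃ i, single R i '' (F.N i : Set M)) = F.submodule := by
  rw [← Submodule.span_closure, submodule_closure_single, Submodule.coe_toAddSubmonoid]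
  exact Submodule.span_eq (UFiltration.submodule F)

theorem submodule_eq_span_le_iff_stable_ge (n₀ : ℕ) :
    F.submodule = Submodule.span _ (⋃ i ≤ n₀, single R i '' (F.N i : Set M)) ↔
      ∀ n ≥ n₀, I • F.N n = F.N (n + 1) := by
  rw [← submodule_span_single, ← LE.le.ge_iff_eq', Submodule.span_le, Set.iUnion_subset_iff]
  swap; · exact Submodule.span_mono (Set.iUnion₂_subset_iUnion _ _)
  constructor
  · intro H n hn
    refine (F.smul_le n).antisymm ?_
    intro x hx
    obtain ⟨l, hl⟩ := (Finsupp.mem_span_iff_linearCombination _ _ _).mp (H _ ⟨x, hx, rfl⟩)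
    replace hl := congr_arg (fun f : PolynomialModule R M => f.coeff (n + 1)) hl
    rw [PolynomialModule.coeff_single, Finsupp.single_apply, if_pos rfl] at hl
    rw [← hl, Finsupp.linearCombination_apply, PolynomialModule.coeff_finsuppSum, Finsupp.sum_apply]
    apply Submodule.sum_mem _ _
    rintro ⟨_, _, ⟨n', rfl⟩, _, ⟨hn', rfl⟩, m, hm, rfl⟩ -
    dsimp only [Subtype.coe_mk]
    rw [Subalgebra.smul_def, smul_single_apply, if_pos (show n' ≤ n + 1 by omega)]
    have e : n' ≤ n := by omega
    have := F.pow_smul_le_pow_smul (n - n') n' 1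
    rw [tsub_add_cancel_of_le e, pow_one, add_comm _ 1, ← add_tsub_assoc_of_le e, add_comm] at this
    exact this (Submodule.smul_mem_smul ((l _).2 <| n + 1 - n') hm)
  · let F' := Submodule.span (reesAlgebra I) (⋃ i ≤ n₀, single R i '' (F.N i : Set M))
    intro hF i
    have : ∀ i ≤ n₀, single R i '' (F.N i : Set M) ⊆ F' := by
      -- Porting note: Original proof was
      -- `fun i hi => Set.Subset.trans (Set.subset_iUnion₂ i hi) Submodule.subset_span`
      intro i hi
      refine Set.Subset.trans ?_ Submodule.subset_span
      refine @Set.subset_iUnion₂ _ _ _ (fun i => fun _ => ↑((single R i) '' ((N F i) : Set M))) i ?_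
      exact hi
    induction' i with j hj
    · exact this _ (Nat.zero_le _)
    by_cases hj' : j.succ ≤ n₀
    · exact this _ hj'
    simp only [not_le, Nat.lt_succ_iff] at hj'
    rw [← hF _ hj']
    rintro _ ⟨m, hm, rfl⟩
    refine Submodule.smul_induction_on hm (fun r hr m' hm' => ?_) (fun x y hx hy => ?_)
    · rw [add_comm, ← monomial_smul_single]
      exact F'.smul_mem
        ⟨_, reesAlgebra.monomial_mem.mpr (by rwa [pow_one])⟩ (hj <| Set.mem_image_of_mem _ hm')
    · rw [PolynomialModule.single_add]
      exact F'.add_mem hx hy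

/-- If the components of a filtration are finitely generated, then the filtration is stable iff
its associated submodule of is finitely generated. -/
theorem submodule_fg_iff_stable (hF' : ∀ i, (F.N i).FG) : F.submodule.FG ↔ F.Stable := by
  classical
  delta Ideal.UFiltration.Stable
  simp_rw [← F.submodule_eq_span_le_iff_stable_ge]
  constructor
  · rintro H
    refine H.stabilizes_of_iSup_eq
        ⟨fun n₀ => Submodule.span _ (⋃ (i : ℕ) (_ : i ≤ n₀), single R i '' ↑(F.N i)), ?_⟩ ?_
    · intro n m e
      rw [Submodule.span_le, Set.iUnion₂_subset_iff]
      intro i hi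
      refine Set.Subset.trans ?_ Submodule.subset_span
      refine @Set.subset_iUnion₂ _ _ _ (fun i => fun _ => ↑((single R i) '' ((N F i) : Set M))) i ?_
      exact hi.trans e
    · show ⨆ n₀, Submodule.span _ (⋃ (i : ℕ) (_ : i ≤ n₀), single R i '' ↑(F.N i)) = F.submodule
      rw [← Submodule.span_iUnion, ← submodule_span_single]
      congr 1
      ext
      simp only [Set.mem_iUnion, Set.mem_image, SetLike.mem_coe, exists_prop]
      constructor
      · rintro ⟨-, i, -, e⟩; exact ⟨i, e⟩
      · rintro ⟨i, e⟩; exact ⟨i, i, le_refl i, e⟩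
  · rintro ⟨n, hn⟩
    rw [hn]
    simp_rw [Submodule.span_iUnion₂, ← Finset.mem_range_succ_iff, iSup_subtype']
    apply Submodule.fg_iSup
    rintro ⟨i, hi⟩
    obtain ⟨s, hs⟩ := hF' i
    have : Submodule.span (reesAlgebra I) (s.image (lsingle R i) : Set (PolynomialModule R M)) =
        Submodule.span _ (single R i '' (F.N i : Set M)) := by
      rw [Finset.coe_image, ← Submodule.span_span_of_tower R, ← Submodule.map_span, hs]; rfl
    rw [Subtype.coe_mk, ← this]
    exact ⟨_, rfl⟩

variable {F}

theorem Stable.of_le [IsNoetherianRing R] [Module.Finite R M] (hF : F.Stable)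
    {F' : I.UFiltration M} (hf : F' ≤ F) : F'.Stable := by
  rw [← submodule_fg_iff_stable] at hF ⊢
  any_goals intro i; exact IsNoetherian.noetherian _
  have := isNoetherian_of_fg_of_noetherian _ hF
  rw [isNoetherian_submodule] at this
  exact this _ (OrderHomClass.mono (submoduleInfHom M I) hf)

theorem Stable.inter_right [IsNoetherianRing R] [Module.Finite R M] (hF : F.Stable) :
    (F ⊓ F').Stable :=
  hF.of_le inf_le_left

theorem Stable.inter_left [IsNoetherianRing R] [Module.Finite R M] (hF : F.Stable) :
    (F' ⊓ F).Stable :=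
  hF.of_le inf_le_right

end Ideal.UFiltration

variable (I)

/-- **Artin-Rees lemma** -/
theorem Ideal.u_exists_pow_inf_eq_pow_smul [IsNoetherianRing R] [Module.Finite R M]
    (N : Submodule R M) : ∃ k : ℕ, ∀ n ≥ k, I ^ n • ⊤ ⊓ N = I ^ (n - k) • (I ^ k • ⊤ ⊓ N) :=
  ((I.stableUFiltration_stable ⊤).inter_right (I.trivialUFiltration N)).exists_pow_smul_eq_of_ge

theorem Ideal.u_mem_iInf_smul_pow_eq_bot_iff [IsNoetherianRing R] [Module.Finite R M] (x : M) :
    x ∈ (⨅ i : ℕ, I ^ i • ⊤ : Submodule R M) ↔ ∃ r : I, (r : R) • x = x := by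
  let N := (⨅ i : ℕ, I ^ i • ⊤ : Submodule R M)
  have hN : ∀ k, (I.stableUFiltration ⊤ ⊓ I.trivialUFiltration N).N k = N :=
    fun k => inf_eq_right.mpr ((iInf_le _ k).trans <| le_of_eq <| by simp)
  constructor
  · obtain ⟨r, hr₁, hr₂⟩ :=
      Submodule.exists_mem_and_smul_eq_self_of_fg_of_le_smul I N (IsNoetherian.noetherian N) (by
        obtain ⟨k, hk⟩ := (I.stableUFiltration_stable ⊤).inter_right (I.trivialUFiltration N)
        have := hk k (le_refl _)
        rw [hN, hN] at this
        exact le_of_eq this.symm)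
    intro H
    exact ⟨⟨r, hr₁⟩, hr₂ _ H⟩
  · rintro ⟨r, eq⟩
    rw [Submodule.mem_iInf]
    intro i
    induction' i with i hi
    · simp
    · rw [add_comm, pow_add, ← smul_smul, pow_one, ← eq]
      exact Submodule.smul_mem_smul r.prop hi

theorem Ideal.u_iInf_pow_smul_eq_bot_of_isLocalRing [IsNoetherianRing R] [IsLocalRing R]
    [Module.Finite R M] (h : I ≠ ⊤) : (⨅ i : ℕ, I ^ i • ⊤ : Submodule R M) = ⊥ := by
  rw [eq_bot_iff]
  intro x hx
  obtain ⟨r, hr⟩ := (Ideal.u_mem_iInf_smul_pow_eq_bot_iff I x).mp hx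
  have := IsLocalRing.isUnit_one_sub_self_of_mem_nonunits _ (IsLocalRing.le_maximalIdeal h r.prop)
  apply this.smul_left_cancel.mp
  simp [sub_smul, hr]


end VendoredFiltration


section Colon

variable {R : Type u} [CommRing R] {M : Type v} [AddCommGroup M] [Module R M]

lemma mem_colonBy {N : Submodule R M} {J : Ideal R} {x : M} :
    x ∈ N.colonBy J ↔ ∀ r ∈ J, r • x ∈ N := Iff.rfl

lemma colonBy_mono {N N' : Submodule R M} (h : N ≤ N') (J : Ideal R) :
    N.colonBy J ≤ N'.colonBy J := fun _ hx r hr => h (hx r hr)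

lemma le_colonBy (N : Submodule R M) (J : Ideal R) : N ≤ N.colonBy J :=
  fun x hx r _ => N.smul_mem r hx

end Colon

section Stab

variable {R : Type u} {M : Type v} [CommRing R] [IsNoetherianRing R]
  [AddCommGroup M] [Module R M] [Module.Finite R M]

-- to be proved via the vendored universe-polymorphic filtration machinery
theorem L_stab (I : Ideal R) (f : ℕ → Submodule R M)
    (hmono : ∀ n, f (n + 1) ≤ f n) (hsmul : ∀ n, I • f n ≤ f (n + 1))
    (hle : ∀ n, f n ≤ I ^ n • ⊤) :
    ∃ n₀, ∀ n ≥ n₀, I • f n = f (n + 1) := by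
  let F : I.UFiltration M := ⟨f, hmono, hsmul⟩
  have hstab : (F ⊓ I.stableUFiltration ⊤).Stable :=
    Ideal.UFiltration.Stable.inter_left F (Ideal.stableUFiltration_stable I ⊤)
  obtain ⟨n₀, h⟩ := hstab
  refine ⟨n₀, fun n hn => ?_⟩
  have e : ∀ m : ℕ, (F ⊓ I.stableUFiltration ⊤).N m = f m := by
    intro m
    rw [show (F ⊓ I.stableUFiltration ⊤).N = F.N ⊓ (I.stableUFiltration ⊤).N from
      Ideal.UFiltration.inf_N F (I.stableUFiltration ⊤)]
    show F.N m ⊓ (I.stableUFiltration ⊤).N m = f m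
    rw [Ideal.stableUFiltration_N]
    exact inf_eq_left.mpr (hle m)
  have h2 := h n hn
  rw [e n, e (n + 1)] at h2
  exact h2

theorem L_AR (I : Ideal R) (N : Submodule R M) :
    ∃ k : ℕ, ∀ n ≥ k, I ^ n • (⊤ : Submodule R M) ⊓ N = I ^ (n - k) • (I ^ k • ⊤ ⊓ N) :=
  Ideal.u_exists_pow_inf_eq_pow_smul I N

variable (I J : Ideal R)

lemma pow_smul_top_succ (k : ℕ) :
    I ^ (k + 1) • (⊤ : Submodule R M) = I • (I ^ k • ⊤) := by
  rw [pow_succ', mul_smul]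

lemma pow_smul_top_antitone {k l : ℕ} (h : k ≤ l) :
    I ^ l • (⊤ : Submodule R M) ≤ I ^ k • ⊤ :=
  Submodule.smul_mono_left (Ideal.pow_le_pow_right h)

/-- (S1): eventually `(I^{k+2}M :_M J) ⊓ I^k M ≤ I^{k+1} M`, provided `I ≤ J`. -/
lemma step_lemma (hIJ : I ≤ J) :
    ∃ K, ∀ k ≥ K, (Submodule.colonBy (I ^ (k + 2) • ⊤ : Submodule R M) J) ⊓ (I ^ k • ⊤)
      ≤ I ^ (k + 1) • ⊤ := by
  set f : ℕ → Submodule R M :=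
    fun k => (Submodule.colonBy (I ^ (k + 2) • ⊤ : Submodule R M) J) ⊓ (I ^ k • ⊤) with hf
  have hmono : ∀ n, f (n + 1) ≤ f n := by
    intro n
    exact inf_le_inf (colonBy_mono (pow_smul_top_antitone I (by omega)) J)
      (pow_smul_top_antitone I (by omega))
  have hsmul : ∀ n, I • f n ≤ f (n + 1) := by
    intro n
    rw [Submodule.smul_le]
    rintro a ha x ⟨hx1, hx2⟩
    constructor
    · intro r hr
      have : r • x ∈ I ^ (n + 2) • (⊤ : Submodule R M) := hx1 r hr
      have h2 : a • r • x ∈ I • (I ^ (n + 2) • (⊤ : Submodule R M)) :=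
        Submodule.smul_mem_smul ha this
      rw [← pow_smul_top_succ] at h2
      rw [smul_comm]
      exact h2
    · have h2 : a • x ∈ I • (I ^ n • (⊤ : Submodule R M)) := Submodule.smul_mem_smul ha hx2
      rwa [← pow_smul_top_succ] at h2
  have hle : ∀ n, f n ≤ I ^ n • ⊤ := fun n => inf_le_right
  obtain ⟨n₀, hn₀⟩ := L_stab I f hmono hsmul hle
  refine ⟨n₀ + 1, fun k hk => ?_⟩
  obtain ⟨k, rfl⟩ : ∃ j, k = j + 1 := ⟨k - 1, by omega⟩
  have h1 : f (k + 1) = I • f k := (hn₀ k (by omega)).symm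
  have h2 : I • f k ≤ I ^ (k + 2) • ⊤ := by
    rw [Submodule.smul_le]
    rintro a ha x ⟨hx1, _⟩
    exact hx1 a (hIJ ha)
  intro x hx
  have : x ∈ f (k + 1) := hx
  rw [h1] at this
  exact h2 this

/-- (S3): with a regular element `a ∈ I`, colons by `J ⊇ I` are contained deep in the filtration. -/
lemma reg_colon (hIJ : I ≤ J) (a : R) (ha : a ∈ I)
    (hreg : ∀ x : M, a • x = 0 → x = 0) :
    ∃ c, ∀ n, Submodule.colonBy (I ^ (n + c) • ⊤ : Submodule R M) J ≤ I ^ n • ⊤ := by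
  set N : Submodule R M := LinearMap.range (LinearMap.lsmul R M a) with hN
  obtain ⟨k, hk⟩ := L_AR I N
  refine ⟨k, fun n x hx => ?_⟩
  have hax : a • x ∈ I ^ (n + k) • (⊤ : Submodule R M) ⊓ N :=
    ⟨hx a (hIJ ha), ⟨x, rfl⟩⟩
  rw [hk (n + k) (by omega)] at hax
  have h2 : I ^ (n + k - k) • (I ^ k • (⊤ : Submodule R M) ⊓ N) ≤ I ^ n • N := by
    have : (n + k - k) = n := by omega
    rw [this]
    exact Submodule.smul_mono le_rfl inf_le_right
  have h3 : a • x ∈ I ^ n • N := h2 hax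
  have h4 : I ^ n • N = Submodule.map (LinearMap.lsmul R M a) (I ^ n • ⊤) := by
    rw [Submodule.map_smul'', Submodule.map_top]
  rw [h4] at h3
  obtain ⟨y, hy, hxy⟩ := h3
  have h5 : a • y = a • x := hxy
  have h6 : x = y := by
    have h7 := hreg (x - y) (by rw [smul_sub, h5]; simp)
    exact sub_eq_zero.mp h7
  rwa [h6]

end Stab

section AssFinite

variable {R : Type u} [CommRing R] {M : Type v} [AddCommGroup M] [Module R M]

/-- Annihilator of a nonzero multiple of an element whose annihilator is prime. -/
lemma ann_smul_eq {p : Ideal R} (hp : p.IsPrime) (z : M) (hz : p = (Submodule.span R {z}).annihilator)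
    {r : R} (hrz : r • z ≠ 0) : (Submodule.span R {r • z}).annihilator = p := by
  apply le_antisymm
  · intro t ht
    rw [Submodule.mem_annihilator_span_singleton] at ht
    have : (t * r) • z = 0 := by rw [mul_smul]; exact ht
    have htr : t * r ∈ p := by
      rw [hz, Submodule.mem_annihilator_span_singleton]; exact this
    rcases hp.mem_or_mem htr with h | h
    · exact h
    · exfalso; apply hrz
      rw [hz, Submodule.mem_annihilator_span_singleton] at h; exact h
  · intro t ht
    rw [Submodule.mem_annihilator_span_singleton]
    rw [hz, Submodule.mem_annihilator_span_singleton] at ht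
    rw [smul_comm, ht, smul_zero]

theorem assFinite [IsNoetherianRing R] [Module.Finite R M] :
    (associatedPrimes R M).Finite := by
  exact associatedPrimes.finite R M

end AssFinite

section Core

open IsLocalRing

variable {R : Type u} {M : Type v} [CommRing R] [IsNoetherianRing R] [IsLocalRing R]
  [AddCommGroup M] [Module R M] [Module.Finite R M]

lemma colonBy_anti {N : Submodule R M} {J J' : Ideal R} (h : J' ≤ J) :
    N.colonBy J ≤ N.colonBy J' := fun _ hx r hr => hx r (h hr)

lemma mem_colonBy_bot_iff {J : Ideal R} {x : M} :
    x ∈ Submodule.colonBy (⊥ : Submodule R M) J ↔ J ≤ (Submodule.span R {x}).annihilator := by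
  constructor
  · intro h r hr
    rw [Submodule.mem_annihilator_span_singleton]
    exact (Submodule.mem_bot R).mp (h r hr)
  · intro h r hr
    rw [Submodule.mem_bot]
    exact Submodule.mem_annihilator_span_singleton _ _ |>.mp (h hr)

theorem exists_regular [Nontrivial M] (I : Ideal R) (hI : I.radical = maximalIdeal R)
    (hsoc : Submodule.colonBy (⊥ : Submodule R M) (maximalIdeal R) = ⊥) :
    ∃ a ∈ I, ∀ x : M, a • x = 0 → x = 0 := by
  by_contra hcon
  push_neg at hcon
  have hfin := assFinite (R := R) (M := M)
  have hsub : (I : Set R) ⊆ ⋃ p ∈ (hfin.toFinset : Set (Ideal R)), ((id p : Ideal R) : Set R) := by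
    intro a haI
    obtain ⟨x, hx1, hx2⟩ := hcon a haI
    obtain ⟨P, hP, hle⟩ := exists_le_isAssociatedPrime_of_isNoetherianRing R x hx2
    have hPs : P ∈ (hfin.toFinset : Set (Ideal R)) := by
      simp only [Set.Finite.coe_toFinset]
      exact hP
    refine Set.mem_biUnion hPs ?_
    exact hle (Submodule.mem_colon_singleton.mpr (by rw [hx1]; exact Submodule.zero_mem _))
  rw [Ideal.subset_union_prime (⊥ : Ideal R) (⊥ : Ideal R) ?hp] at hsub
  case hp =>
    intro p hp _ _
    exact (hfin.mem_toFinset.mp hp).isPrime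
  obtain ⟨p, hps, hIp⟩ := hsub
  have hpass := hfin.mem_toFinset.mp hps
  obtain ⟨hpprime, z, hz⟩ := isAssociatedPrime_iff.mp hpass
  replace hz : p = (Submodule.span R {z}).annihilator := by
    rw [hz]; ext t; rw [Submodule.mem_colon_singleton, Submodule.mem_annihilator_span_singleton, Submodule.mem_bot]
  have hpm : p = maximalIdeal R := by
    apply le_antisymm (le_maximalIdeal hpprime.ne_top)
    rw [← hI]
    calc I.radical ≤ p.radical := Ideal.radical_mono hIp
      _ = p := hpprime.radical
  have hzne : z ≠ 0 := by
    rintro rfl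
    apply hpprime.ne_top
    rw [hz, eq_top_iff]
    intro t _
    rw [Submodule.mem_annihilator_span_singleton, smul_zero]
  apply hzne
  have : z ∈ Submodule.colonBy (⊥ : Submodule R M) (maximalIdeal R) := by
    rw [mem_colonBy_bot_iff, ← hpm, hz]
  rw [hsoc] at this
  exact (Submodule.mem_bot R).mp this

theorem core_lemma (I : Ideal R) (hI : I.radical = maximalIdeal R)
    (hsoc : Submodule.colonBy (⊥ : Submodule R M) (maximalIdeal R) = ⊥) :
    ∃ N, ∀ n ≥ N,
      Submodule.colonBy (I ^ (n + 1) • ⊤ : Submodule R M) (maximalIdeal R) ≤ I ^ n • ⊤ := by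
  have hIJ : I ≤ maximalIdeal R := le_trans Ideal.le_radical (le_of_eq hI)
  by_cases htriv : Subsingleton M
  · refine ⟨0, fun n _ x _ => ?_⟩
    rw [Subsingleton.elim x 0]
    exact Submodule.zero_mem _
  · haveI : Nontrivial M := not_subsingleton_iff_nontrivial.mp htriv
    obtain ⟨a, ha, hreg⟩ := exists_regular I hI hsoc
    obtain ⟨c, hc⟩ := reg_colon (M := M) I (maximalIdeal R) hIJ a ha hreg
    obtain ⟨K, hK⟩ := step_lemma (M := M) I (maximalIdeal R) hIJ
    refine ⟨K + c, fun n hn x hx => ?_⟩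
    have h0 : x ∈ I ^ (n - c) • (⊤ : Submodule R M) := by
      apply hc (n - c)
      exact colonBy_mono (pow_smul_top_antitone I (by omega)) _ hx
    have boot : ∀ d j, K ≤ j → j + d = n → x ∈ I ^ j • (⊤ : Submodule R M) →
        x ∈ I ^ n • (⊤ : Submodule R M) := by
      intro d
      induction d with
      | zero =>
        intro j _ hj hxj
        rw [Nat.add_zero] at hj
        rwa [hj] at hxj
      | succ d ihd =>
        intro j hKj hj hxj
        have hcolon : x ∈ Submodule.colonBy (I ^ (j + 2) • ⊤ : Submodule R M) (maximalIdeal R) :=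
          colonBy_mono (pow_smul_top_antitone I (by omega)) _ hx
        have hnext := hK j hKj ⟨hcolon, hxj⟩
        exact ihd (j + 1) (by omega) (by omega) hnext
    exact boot (n - (n - c)) (n - c) (by omega) (by omega) h0

theorem main_claim (I : Ideal R) (hI : I.radical = maximalIdeal R) :
    ∃ N, ∀ n ≥ N,
      Submodule.colonBy (I ^ (n + 1) • ⊤ : Submodule R M) (maximalIdeal R)
        ≤ (I ^ n • ⊤) ⊔ Submodule.colonBy (⊥ : Submodule R M) (maximalIdeal R) := by
  have hIJ : I ≤ maximalIdeal R := le_trans Ideal.le_radical (le_of_eq hI)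
  -- the torsion submodule H
  let f : ℕ →o Submodule R M :=
    ⟨fun j => Submodule.colonBy (⊥ : Submodule R M) ((maximalIdeal R) ^ j),
     fun j k hjk => colonBy_anti (Ideal.pow_le_pow_right hjk)⟩
  obtain ⟨s, hs⟩ := monotone_stabilizes_iff_noetherian.mpr (inferInstance : IsNoetherian R M) f
  set H : Submodule R M := Submodule.colonBy (⊥ : Submodule R M) ((maximalIdeal R) ^ (s + 1))
    with hH
  have hsocH : Submodule.colonBy (⊥ : Submodule R M) (maximalIdeal R) ≤ H :=
    colonBy_anti (Ideal.pow_le_self (by omega))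
  have hHsat : ∀ x : M, (∀ r ∈ maximalIdeal R, r • x ∈ H) → x ∈ H := by
    intro x hx
    have hstep : x ∈ Submodule.colonBy (⊥ : Submodule R M) ((maximalIdeal R) ^ (s + 2)) := by
      rw [mem_colonBy_bot_iff, pow_succ, Ideal.mul_le]
      intro r hr t ht
      rw [Submodule.mem_annihilator_span_singleton, mul_smul]
      exact (Submodule.mem_bot R).mp ((hx t ht) r hr)
    have he : f (s + 1) = f (s + 2) := (hs (s + 1) (by omega)).symm.trans (hs (s + 2) (by omega))
    show x ∈ f (s + 1)
    rw [he]
    exact hstep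
  have hkill : ∀ j, s + 1 ≤ j → (I ^ j • H : Submodule R M) = ⊥ := by
    intro j hj
    rw [eq_bot_iff]
    calc I ^ j • H ≤ (maximalIdeal R) ^ (s + 1) • H :=
          Submodule.smul_mono (le_trans (Ideal.pow_le_pow_right hj) (Ideal.pow_right_mono hIJ (s + 1))) le_rfl
      _ ≤ ⊥ := by
          rw [Submodule.smul_le]
          intro r hr x hxH
          exact hxH r hr
  have hdisj : ∃ N₀, ∀ n ≥ N₀, (I ^ n • ⊤ : Submodule R M) ⊓ H = ⊥ := by
    obtain ⟨k, hk⟩ := L_AR I H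
    refine ⟨k + s + 1, fun n hn => ?_⟩
    rw [eq_bot_iff]
    calc (I ^ n • ⊤ : Submodule R M) ⊓ H = I ^ (n - k) • ((I ^ k • ⊤ : Submodule R M) ⊓ H) :=
          hk n (by omega)
      _ ≤ I ^ (n - k) • H := Submodule.smul_mono le_rfl inf_le_right
      _ = ⊥ := hkill (n - k) (by omega)
  -- the quotient module
  have hsocMb : Submodule.colonBy (⊥ : Submodule R (M ⧸ H)) (maximalIdeal R) = ⊥ := by
    rw [eq_bot_iff]
    intro xb hxb
    obtain ⟨x, rfl⟩ := H.mkQ_surjective xb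
    have hxH : x ∈ H := by
      apply hHsat
      intro r hr
      have h1 : H.mkQ (r • x) = 0 := by
        rw [map_smul]
        exact (Submodule.mem_bot R).mp (hxb r hr)
      rwa [Submodule.mkQ_apply, Submodule.Quotient.mk_eq_zero] at h1
    rw [Submodule.mem_bot, Submodule.mkQ_apply, Submodule.Quotient.mk_eq_zero]
    exact hxH
  obtain ⟨N₁, hN₁⟩ := core_lemma (M := M ⧸ H) I hI hsocMb
  obtain ⟨N₀, hN₀⟩ := hdisj
  refine ⟨max N₁ N₀, fun n hn x hx => ?_⟩
  have hmap : ∀ k : ℕ, Submodule.map H.mkQ (I ^ k • ⊤ : Submodule R M)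
      = (I ^ k • ⊤ : Submodule R (M ⧸ H)) := by
    intro k
    rw [Submodule.map_smul'', Submodule.map_top, Submodule.range_mkQ]
  have hxb : H.mkQ x ∈ Submodule.colonBy (I ^ (n + 1) • ⊤ : Submodule R (M ⧸ H))
      (maximalIdeal R) := by
    intro r hr
    have h1 : r • x ∈ (I ^ (n + 1) • ⊤ : Submodule R M) := hx r hr
    have h2 : r • H.mkQ x = H.mkQ (r • x) := (map_smul _ _ _).symm
    rw [h2, ← hmap (n + 1)]
    exact Submodule.mem_map_of_mem h1
  have h2 : H.mkQ x ∈ (I ^ n • ⊤ : Submodule R (M ⧸ H)) :=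
    hN₁ n (le_trans (le_max_left _ _) hn) hxb
  have h3 : x ∈ (I ^ n • ⊤ : Submodule R M) ⊔ H := by
    have h4 : x ∈ Submodule.comap H.mkQ (Submodule.map H.mkQ (I ^ n • ⊤ : Submodule R M)) := by
      rw [Submodule.mem_comap, hmap n]
      exact h2
    rwa [Submodule.comap_map_eq, Submodule.ker_mkQ] at h4
  obtain ⟨y, hy, h, hh, rfl⟩ := Submodule.mem_sup.mp h3
  have hhsoc : h ∈ Submodule.colonBy (⊥ : Submodule R M) (maximalIdeal R) := by
    intro r hr
    have h4 : r • (y + h) ∈ (I ^ (n + 1) • ⊤ : Submodule R M) := hx r hr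
    have h5 : r • y ∈ (I ^ n • ⊤ : Submodule R M) := Submodule.smul_mem _ r hy
    have h6 : r • h ∈ (I ^ n • ⊤ : Submodule R M) := by
      have he : r • h = r • (y + h) - r • y := by rw [smul_add]; abel
      rw [he]
      exact Submodule.sub_mem _ (pow_smul_top_antitone I (by omega) h4) h5
    have h7 : r • h ∈ H := H.smul_mem r hh
    have h8 : r • h ∈ (I ^ n • ⊤ : Submodule R M) ⊓ H := ⟨h6, h7⟩
    rwa [hN₀ n (le_trans (le_max_right _ _) hn)] at h8
  exact Submodule.mem_sup.mpr ⟨y, hy, h, hhsoc, rfl⟩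

end Core

/-- Eventually `ℓ((I^{n+1}M :_M 𝔪)/I^{n+1}M) ≤ ℓ(I^n M/I^{n+1}M) + ℓ(0 :_M 𝔪)`. -/
theorem statement10 {R M : Type*} [CommRing R] [IsNoetherianRing R] [IsLocalRing R]
    [AddCommGroup M] [Module R M] [Module.Finite R M]
    (I : Ideal R) (hI : I.radical = maximalIdeal R) :
    ∃ N : ℕ, ∀ n ≥ N,
      moduleLength R ↥(Submodule.map (I ^ (n + 1) • ⊤ : Submodule R M).mkQ
          ((I ^ (n + 1) • ⊤ : Submodule R M).colonBy (maximalIdeal R)))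
        ≤ moduleLength R ↥(Submodule.map (I ^ (n + 1) • ⊤ : Submodule R M).mkQ
            (I ^ n • ⊤ : Submodule R M))
          + moduleLength R ↥((⊥ : Submodule R M).colonBy (maximalIdeal R)) := by
  obtain ⟨N, hN⟩ := main_claim (M := M) I hI
  refine ⟨N, fun n hn => ?_⟩
  set P : Submodule R M := I ^ (n + 1) • ⊤ with hP
  set S : Submodule R M := (⊥ : Submodule R M).colonBy (maximalIdeal R) with hS
  have hle : Submodule.map P.mkQ (P.colonBy (maximalIdeal R)) ≤
      Submodule.map P.mkQ (I ^ n • ⊤ : Submodule R M) ⊔ Submodule.map P.mkQ S := by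
    rw [← Submodule.map_sup]
    exact Submodule.map_mono (hN n hn)
  calc moduleLength R ↥(Submodule.map P.mkQ (P.colonBy (maximalIdeal R)))
      ≤ moduleLength R ↥(Submodule.map P.mkQ (I ^ n • ⊤ : Submodule R M)
          ⊔ Submodule.map P.mkQ S) := mlen_mono hle
    _ ≤ moduleLength R ↥(Submodule.map P.mkQ (I ^ n • ⊤ : Submodule R M))
          + moduleLength R ↥(Submodule.map P.mkQ S) := mlen_sup_le _ _
    _ ≤ moduleLength R ↥(Submodule.map P.mkQ (I ^ n • ⊤ : Submodule R M))
          + moduleLength R ↥S := add_le_add_right (mlen_map_le P.mkQ S) _
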